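/- For each integer k ≥ 1, every real root of the characteristic polynomial det(X·I − M_k) that is strictly greater than 1 is a root of p_k(X) = X^(4k+2) − X^(4k+1) − 4·X^(2k+1) − X + 1, and conversely every real root of p_k greater than 1 is a root of the characteristic polynomial of M_k. -/

import Mathlib

open Matrix


/-- The transition matrix `Mₖ`. Rows/columns are indexed by `Fin (4k+4)` with the labeling
`0 = a`, `1 = b`, `2 = c`, `3 = d`, `4 + i = xᵢ` (`0 ≤ i ≤ 2k-1`), `2k+4+i = yᵢ`
(`0 ≤ i ≤ 2k-1`). Nonzero entries: column `a` has `1` in rows `a, x₀, y₀`; column `b` has `1`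
in rows `b, x₀, y₀`; column `c` has `1` in row `d`; column `d` has `1` in rows `d, x₀, y₁`;
column `xᵢ` (`0 ≤ i ≤ 2k-2`) has `1` in row `xᵢ₊₁`; column `x_{2k-1}` has `1` in rows
`a, b, y₀`; column `yᵢ` (`0 ≤ i ≤ 2k-2`) has `1` in row `yᵢ₊₁`; column `y_{2k-1}` has `1`
in rows `b, c`. -/
def Mk (k : ℕ) : Matrix (Fin (4 * k + 4)) (Fin (4 * k + 4)) ℝ :=
  fun i j =>
    if j.val = 0 then (if i.val = 0 ∨ i.val = 4 ∨ i.val = 2 * k + 4 then 1 else 0)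
    else if j.val = 1 then (if i.val = 1 ∨ i.val = 4 ∨ i.val = 2 * k + 4 then 1 else 0)
    else if j.val = 2 then (if i.val = 3 then 1 else 0)
    else if j.val = 3 then (if i.val = 3 ∨ i.val = 4 ∨ i.val = 2 * k + 5 then 1 else 0)
    else if j.val = 2 * k + 3 then (if i.val = 0 ∨ i.val = 1 ∨ i.val = 2 * k + 4 then 1 else 0)
    else if j.val = 4 * k + 3 then (if i.val = 1 ∨ i.val = 2 then 1 else 0)
    else (if i.val = j.val + 1 then 1 else 0)

lemma sum_ite_val {n m : ℕ} (hm : m < n) (v : Fin n → ℝ) :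
    (∑ j : Fin n, if (j : ℕ) = m then v j else 0) = v ⟨m, hm⟩ := by
  rw [Finset.sum_eq_single (⟨m, hm⟩ : Fin n)]
  · simp
  · intro b _ hb; rw [if_neg]; exact fun h => hb (Fin.ext h)
  · simp

section Rows
variable {k : ℕ} (hk : 1 ≤ k) (v : Fin (4*k+4) → ℝ) (i : Fin (4*k+4))
include hk

lemma row0 (hi : i.val = 0) :
    (Mk k *ᵥ v) i = v ⟨0, by omega⟩ + v ⟨2*k+3, by omega⟩ := by
  have hrow : ∀ j : Fin (4*k+4), Mk k i j * v j =
      (if (j:ℕ) = 0 then v j else 0) + (if (j:ℕ) = 2*k+3 then v j else 0) := by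
    intro j; simp only [Mk]
    split_ifs <;> first | exact rfl | ring1 | (exfalso; omega)
  show (∑ j, Mk k i j * v j) = _
  rw [Finset.sum_congr rfl fun j _ => hrow j, Finset.sum_add_distrib,
    sum_ite_val (by omega) v, sum_ite_val (by omega) v]

lemma row1 (hi : i.val = 1) :
    (Mk k *ᵥ v) i = v ⟨1, by omega⟩ + v ⟨2*k+3, by omega⟩ + v ⟨4*k+3, by omega⟩ := by
  have hrow : ∀ j : Fin (4*k+4), Mk k i j * v j =
      (if (j:ℕ) = 1 then v j else 0) + (if (j:ℕ) = 2*k+3 then v j else 0)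
        + (if (j:ℕ) = 4*k+3 then v j else 0) := by
    intro j; simp only [Mk]
    split_ifs <;> first | exact rfl | ring1 | (exfalso; omega)
  show (∑ j, Mk k i j * v j) = _
  rw [Finset.sum_congr rfl fun j _ => hrow j, Finset.sum_add_distrib, Finset.sum_add_distrib,
    sum_ite_val (by omega) v, sum_ite_val (by omega) v, sum_ite_val (by omega) v]

lemma row2 (hi : i.val = 2) :
    (Mk k *ᵥ v) i = v ⟨4*k+3, by omega⟩ := by
  have hrow : ∀ j : Fin (4*k+4), Mk k i j * v j = (if (j:ℕ) = 4*k+3 then v j else 0) := by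
    intro j; simp only [Mk]
    split_ifs <;> first | exact rfl | ring1 | (exfalso; omega)
  show (∑ j, Mk k i j * v j) = _
  rw [Finset.sum_congr rfl fun j _ => hrow j, sum_ite_val (by omega) v]

lemma row3 (hi : i.val = 3) :
    (Mk k *ᵥ v) i = v ⟨2, by omega⟩ + v ⟨3, by omega⟩ := by
  have hrow : ∀ j : Fin (4*k+4), Mk k i j * v j =
      (if (j:ℕ) = 2 then v j else 0) + (if (j:ℕ) = 3 then v j else 0) := by
    intro j; simp only [Mk]
    split_ifs <;> first | exact rfl | ring1 | (exfalso; omega)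
  show (∑ j, Mk k i j * v j) = _
  rw [Finset.sum_congr rfl fun j _ => hrow j, Finset.sum_add_distrib,
    sum_ite_val (by omega) v, sum_ite_val (by omega) v]

lemma row4 (hi : i.val = 4) :
    (Mk k *ᵥ v) i = v ⟨0, by omega⟩ + v ⟨1, by omega⟩ + v ⟨3, by omega⟩ := by
  have hrow : ∀ j : Fin (4*k+4), Mk k i j * v j =
      (if (j:ℕ) = 0 then v j else 0) + (if (j:ℕ) = 1 then v j else 0)
        + (if (j:ℕ) = 3 then v j else 0) := by
    intro j; simp only [Mk]
    split_ifs <;> first | exact rfl | ring1 | (exfalso; omega)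
  show (∑ j, Mk k i j * v j) = _
  rw [Finset.sum_congr rfl fun j _ => hrow j, Finset.sum_add_distrib, Finset.sum_add_distrib,
    sum_ite_val (by omega) v, sum_ite_val (by omega) v, sum_ite_val (by omega) v]

lemma rowY0 (hi : i.val = 2*k+4) :
    (Mk k *ᵥ v) i = v ⟨0, by omega⟩ + v ⟨1, by omega⟩ + v ⟨2*k+3, by omega⟩ := by
  have hrow : ∀ j : Fin (4*k+4), Mk k i j * v j =
      (if (j:ℕ) = 0 then v j else 0) + (if (j:ℕ) = 1 then v j else 0)
        + (if (j:ℕ) = 2*k+3 then v j else 0) := by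
    intro j; simp only [Mk]
    split_ifs <;> first | exact rfl | ring1 | (exfalso; omega)
  show (∑ j, Mk k i j * v j) = _
  rw [Finset.sum_congr rfl fun j _ => hrow j, Finset.sum_add_distrib, Finset.sum_add_distrib,
    sum_ite_val (by omega) v, sum_ite_val (by omega) v, sum_ite_val (by omega) v]

lemma rowY1 (hi : i.val = 2*k+5) :
    (Mk k *ᵥ v) i = v ⟨3, by omega⟩ + v ⟨2*k+4, by omega⟩ := by
  have hrow : ∀ j : Fin (4*k+4), Mk k i j * v j =
      (if (j:ℕ) = 3 then v j else 0) + (if (j:ℕ) = 2*k+4 then v j else 0) := by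
    intro j; simp only [Mk]
    split_ifs <;> first | exact rfl | ring1 | (exfalso; omega)
  show (∑ j, Mk k i j * v j) = _
  rw [Finset.sum_congr rfl fun j _ => hrow j, Finset.sum_add_distrib,
    sum_ite_val (by omega) v, sum_ite_val (by omega) v]

lemma rowgen (hi : 5 ≤ i.val ∧ i.val ≤ 2*k+3 ∨ 2*k+6 ≤ i.val ∧ i.val ≤ 4*k+3) :
    (Mk k *ᵥ v) i = v ⟨i.val - 1, by omega⟩ := by
  have hrow : ∀ j : Fin (4*k+4), Mk k i j * v j =
      (if (j:ℕ) = i.val - 1 then v j else 0) := by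
    intro j; simp only [Mk]
    split_ifs <;> first | exact rfl | ring1 | (exfalso; omega)
  show (∑ j, Mk k i j * v j) = _
  rw [Finset.sum_congr rfl fun j _ => hrow j, sum_ite_val (by omega) v]

end Rows

lemma charpoly_eval_eq_det (k : ℕ) (lam : ℝ) (M : Matrix (Fin (4*k+4)) (Fin (4*k+4)) ℝ) :
    M.charpoly.eval lam = (Matrix.scalar (Fin (4*k+4)) lam - M).det := by
  rw [Matrix.charpoly, eval_det, Matrix.matPolyEquiv_charmatrix]
  simp

lemma det_zero_iff_eig (k : ℕ) (lam : ℝ) (M : Matrix (Fin (4*k+4)) (Fin (4*k+4)) ℝ) :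
    ((Matrix.scalar (Fin (4*k+4)) lam - M).det = 0) ↔ ∃ v ≠ 0, M *ᵥ v = lam • v := by
  rw [← Matrix.exists_mulVec_eq_zero_iff]
  refine exists_congr fun v => and_congr_right fun _ => ?_
  have hs : (Matrix.scalar (Fin (4*k+4)) lam) *ᵥ v = lam • v := by
    ext i; simp [Matrix.mulVec, dotProduct, Matrix.scalar_apply, Matrix.diagonal]
  rw [Matrix.sub_mulVec, hs, sub_eq_zero, eq_comm]


noncomputable def eigvec (k : ℕ) (lam X Y : ℝ) : Fin (4*k+4) → ℝ := fun idx =>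
  if idx.val = 0 then X/(lam-1)
  else if idx.val = 1 then (X+Y)/(lam-1)
  else if idx.val = 2 then Y/lam
  else if idx.val = 3 then Y/(lam*(lam-1))
  else if idx.val ≤ 2*k+3 then lam^(2*k+3-idx.val) * X
  else if idx.val = 2*k+4 then lam^(2*k-1) * Y - Y/(lam*(lam-1))
  else lam^(4*k+3-idx.val) * Y

section EigEval
variable {k : ℕ} (lam X Y : ℝ) (idx : Fin (4*k+4))

lemma eigvec0 (h : idx.val = 0) : eigvec k lam X Y idx = X/(lam-1) := by
  simp only [eigvec]; rw [if_pos h]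

lemma eigvec1 (h : idx.val = 1) : eigvec k lam X Y idx = (X+Y)/(lam-1) := by
  simp only [eigvec]; rw [if_neg (by omega), if_pos h]

lemma eigvec2 (h : idx.val = 2) : eigvec k lam X Y idx = Y/lam := by
  simp only [eigvec]; rw [if_neg (by omega), if_neg (by omega), if_pos h]

lemma eigvec3 (h : idx.val = 3) : eigvec k lam X Y idx = Y/(lam*(lam-1)) := by
  simp only [eigvec]
  rw [if_neg (by omega), if_neg (by omega), if_neg (by omega), if_pos h]

lemma eigvecX (h4 : 4 ≤ idx.val) (h2 : idx.val ≤ 2*k+3) :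
    eigvec k lam X Y idx = lam^(2*k+3-idx.val) * X := by
  simp only [eigvec]
  rw [if_neg (by omega), if_neg (by omega), if_neg (by omega), if_neg (by omega), if_pos h2]

lemma eigvecY0 (h : idx.val = 2*k+4) :
    eigvec k lam X Y idx = lam^(2*k-1) * Y - Y/(lam*(lam-1)) := by
  simp only [eigvec]
  rw [if_neg (by omega), if_neg (by omega), if_neg (by omega), if_neg (by omega),
    if_neg (by omega), if_pos h]

lemma eigvecYg (h : 2*k+5 ≤ idx.val) :
    eigvec k lam X Y idx = lam^(4*k+3-idx.val) * Y := by
  simp only [eigvec]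
  rw [if_neg (by omega), if_neg (by omega), if_neg (by omega), if_neg (by omega),
    if_neg (by omega), if_neg (by omega)]

end EigEval

theorem Mk_charpoly_roots_gt_one (k : ℕ) (hk : 1 ≤ k) (lam : ℝ) (hlam : 1 < lam) :
    (Mk k).charpoly.eval lam = 0 ↔
      lam ^ (4 * k + 2) - lam ^ (4 * k + 1) - 4 * lam ^ (2 * k + 1) - lam + 1 = 0 := by
  have h0 : lam ≠ 0 := by linarith
  have h1 : lam - 1 ≠ 0 := by intro h; linarith [sub_eq_zero.mp h]
  have hl1 : lam + 1 ≠ 0 := by linarith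
  rw [charpoly_eval_eq_det, det_zero_iff_eig,
    show (4*k+2 : ℕ) = (2*k-2)+((2*k-2)+6) from by omega, pow_add, pow_add,
    show (4*k+1 : ℕ) = (2*k-2)+((2*k-2)+5) from by omega, pow_add, pow_add,
    show (2*k+1 : ℕ) = (2*k-2)+3 from by omega, pow_add]
  constructor
  · rintro ⟨v, hv0, hv⟩
    have E : ∀ i, (Mk k *ᵥ v) i = lam * v i := fun i => by rw [hv]; rfl
    have Egen : ∀ m, (5 ≤ m ∧ m ≤ 2*k+3 ∨ 2*k+6 ≤ m ∧ m ≤ 4*k+3) →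
        ∀ (h : m < 4*k+4), lam * v ⟨m, h⟩ = v ⟨m-1, by omega⟩ := by
      intro m hm h
      have hE := E ⟨m, h⟩
      rw [rowgen hk v _ hm] at hE
      exact hE.symm
    -- chains
    have chainx : ∀ m (hm : m ≤ 2*k-1), lam^m * v ⟨4+m, by omega⟩ = v ⟨4, by omega⟩ := by
      intro m
      induction m with
      | zero => intro _; rw [pow_zero, one_mul]
      | succ n ih =>
        intro hn
        have hstep := Egen (4+(n+1)) (Or.inl ⟨by omega, by omega⟩) (by omega)
        calc lam^(n+1) * v ⟨4+(n+1), by omega⟩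
            = lam^n * (lam * v ⟨4+(n+1), by omega⟩) := by ring
          _ = lam^n * v ⟨4+n, by omega⟩ := by rw [hstep]; rfl
          _ = v ⟨4, by omega⟩ := ih (by omega)
    have chainy : ∀ m (hm : m ≤ 2*k-2), lam^m * v ⟨2*k+5+m, by omega⟩ = v ⟨2*k+5, by omega⟩ := by
      intro m
      induction m with
      | zero => intro _; rw [pow_zero, one_mul]
      | succ n ih =>
        intro hn
        have hstep := Egen (2*k+5+(n+1)) (Or.inr ⟨by omega, by omega⟩) (by omega)
        calc lam^(n+1) * v ⟨2*k+5+(n+1), by omega⟩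
            = lam^n * (lam * v ⟨2*k+5+(n+1), by omega⟩) := by ring
          _ = lam^n * v ⟨2*k+5+n, by omega⟩ := by rw [hstep]; rfl
          _ = v ⟨2*k+5, by omega⟩ := ih (by omega)
    -- coordinates
    have ea : lam * v ⟨0, by omega⟩ = v ⟨0, by omega⟩ + v ⟨2*k+3, by omega⟩ := by
      have h := E ⟨0, by omega⟩; rw [row0 hk v _ rfl] at h; exact h.symm
    have eb : lam * v ⟨1, by omega⟩
        = v ⟨1, by omega⟩ + v ⟨2*k+3, by omega⟩ + v ⟨4*k+3, by omega⟩ := by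
      have h := E ⟨1, by omega⟩; rw [row1 hk v _ rfl] at h; exact h.symm
    have ec : lam * v ⟨2, by omega⟩ = v ⟨4*k+3, by omega⟩ := by
      have h := E ⟨2, by omega⟩; rw [row2 hk v _ rfl] at h; exact h.symm
    have ed : lam * v ⟨3, by omega⟩ = v ⟨2, by omega⟩ + v ⟨3, by omega⟩ := by
      have h := E ⟨3, by omega⟩; rw [row3 hk v _ rfl] at h; exact h.symm
    have ex0 : lam * v ⟨4, by omega⟩ = v ⟨0, by omega⟩ + v ⟨1, by omega⟩ + v ⟨3, by omega⟩ := by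
      have h := E ⟨4, by omega⟩; rw [row4 hk v _ rfl] at h; exact h.symm
    have ey0 : lam * v ⟨2*k+4, by omega⟩
        = v ⟨0, by omega⟩ + v ⟨1, by omega⟩ + v ⟨2*k+3, by omega⟩ := by
      have h := E ⟨2*k+4, by omega⟩; rw [rowY0 hk v _ rfl] at h; exact h.symm
    have ey1 : lam * v ⟨2*k+5, by omega⟩ = v ⟨3, by omega⟩ + v ⟨2*k+4, by omega⟩ := by
      have h := E ⟨2*k+5, by omega⟩; rw [rowY1 hk v _ rfl] at h; exact h.symm
    -- chain endpoints
    have hXc : v (⟨4+(2*k-1), by omega⟩ : Fin (4*k+4)) = v ⟨2*k+3, by omega⟩ := by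
      congr 1
      exact Fin.ext (show 4+(2*k-1) = 2*k+3 from by omega)
    have hYc : v (⟨2*k+5+(2*k-2), by omega⟩ : Fin (4*k+4)) = v ⟨4*k+3, by omega⟩ := by
      congr 1
      exact Fin.ext (show 2*k+5+(2*k-2) = 4*k+3 from by omega)
    have hX : lam^(2*k-1) * v ⟨2*k+3, by omega⟩ = v ⟨4, by omega⟩ := by
      rw [← hXc]; exact chainx (2*k-1) le_rfl
    have hY : lam^(2*k-2) * v ⟨4*k+3, by omega⟩ = v ⟨2*k+5, by omega⟩ := by
      rw [← hYc]; exact chainy (2*k-2) le_rfl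
    have hpow1 : lam^(2*k-1) = lam^(2*k-2) * lam := by
      rw [show 2*k-1 = (2*k-2)+1 from by omega, pow_succ]
    rw [hpow1] at hX
    -- key algebraic equations
    have hx : lam * (lam^(2*k-2) * lam * v ⟨2*k+3, by omega⟩)
        = v ⟨0, by omega⟩ + v ⟨1, by omega⟩ + v ⟨3, by omega⟩ := by rw [hX]; exact ex0
    have hy1 : lam * (lam^(2*k-2) * v ⟨4*k+3, by omega⟩)
        = v ⟨3, by omega⟩ + v ⟨2*k+4, by omega⟩ := by rw [hY]; exact ey1
    have hy2 : lam * (lam * (lam^(2*k-2) * v ⟨4*k+3, by omega⟩))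
        = lam * v ⟨3, by omega⟩ + (v ⟨0, by omega⟩ + v ⟨1, by omega⟩ + v ⟨2*k+3, by omega⟩) := by
      linear_combination lam * hy1 + ey0
    have I : lam^(2*k-2)*lam^3*(lam-1) * v ⟨2*k+3, by omega⟩
        = 2*lam* v ⟨2*k+3, by omega⟩ + (lam+1) * v ⟨4*k+3, by omega⟩ := by
      linear_combination (lam*(lam-1))*hx + lam*ea + lam*eb + lam*ed + ec
    have II : lam^(2*k-2)*lam^2*(lam-1) * v ⟨4*k+3, by omega⟩
        = 2 * v ⟨4*k+3, by omega⟩ + (lam+1) * v ⟨2*k+3, by omega⟩ := by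
      linear_combination (lam-1)*hy2 + lam*ed + ec + ea + eb
    have hfinal : (lam-1) * (lam^(2*k-2) * (lam^(2*k-2) * lam^6)
        - lam^(2*k-2) * (lam^(2*k-2) * lam^5) - 4 * (lam^(2*k-2) * lam^3) - lam + 1)
        * v ⟨2*k+3, by omega⟩ = 0 := by
      linear_combination (lam^(2*k-2)*lam^2*(lam-1)-2) * I + (lam+1) * II
    by_cases hXz : v (⟨2*k+3, by omega⟩ : Fin (4*k+4)) = 0
    · -- eigenvector must be zero: contradiction
      exfalso
      have hYz : v (⟨4*k+3, by omega⟩ : Fin (4*k+4)) = 0 := by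
        have h : (lam+1) * v ⟨4*k+3, by omega⟩ = 0 := by
          linear_combination (-1) * I + (lam^(2*k-2)*lam^3*(lam-1) - 2*lam) * hXz
        rcases mul_eq_zero.mp h with h' | h'
        · exact absurd h' hl1
        · exact h'
      have h0z : v (⟨0, by omega⟩ : Fin (4*k+4)) = 0 := by
        have h : (lam-1) * v ⟨0, by omega⟩ = 0 := by linear_combination ea + hXz
        rcases mul_eq_zero.mp h with h' | h'
        · exact absurd h' h1
        · exact h'
      have h1z : v (⟨1, by omega⟩ : Fin (4*k+4)) = 0 := by
        have h : (lam-1) * v ⟨1, by omega⟩ = 0 := by linear_combination eb + hXz + hYz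
        rcases mul_eq_zero.mp h with h' | h'
        · exact absurd h' h1
        · exact h'
      have h2z : v (⟨2, by omega⟩ : Fin (4*k+4)) = 0 := by
        have h : lam * v ⟨2, by omega⟩ = 0 := by linear_combination ec + hYz
        rcases mul_eq_zero.mp h with h' | h'
        · exact absurd h' h0
        · exact h'
      have h3z : v (⟨3, by omega⟩ : Fin (4*k+4)) = 0 := by
        have h : (lam-1) * v ⟨3, by omega⟩ = 0 := by linear_combination ed + h2z
        rcases mul_eq_zero.mp h with h' | h'
        · exact absurd h' h1
        · exact h'
      have h4z : v (⟨4, by omega⟩ : Fin (4*k+4)) = 0 := by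
        have h : lam * v ⟨4, by omega⟩ = 0 := by linear_combination ex0 + h0z + h1z + h3z
        rcases mul_eq_zero.mp h with h' | h'
        · exact absurd h' h0
        · exact h'
      have hy0z : v (⟨2*k+4, by omega⟩ : Fin (4*k+4)) = 0 := by
        have h : lam * v ⟨2*k+4, by omega⟩ = 0 := by linear_combination ey0 + h0z + h1z + hXz
        rcases mul_eq_zero.mp h with h' | h'
        · exact absurd h' h0
        · exact h'
      have hy1z : v (⟨2*k+5, by omega⟩ : Fin (4*k+4)) = 0 := by
        have h : lam * v ⟨2*k+5, by omega⟩ = 0 := by linear_combination ey1 + h3z + hy0z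
        rcases mul_eq_zero.mp h with h' | h'
        · exact absurd h' h0
        · exact h'
      apply hv0
      funext i
      show v i = 0
      by_cases c0 : i.val = 0
      · rw [show i = ⟨0, by omega⟩ from Fin.ext c0]; exact h0z
      by_cases c1 : i.val = 1
      · rw [show i = ⟨1, by omega⟩ from Fin.ext c1]; exact h1z
      by_cases c2 : i.val = 2
      · rw [show i = ⟨2, by omega⟩ from Fin.ext c2]; exact h2z
      by_cases c3 : i.val = 3
      · rw [show i = ⟨3, by omega⟩ from Fin.ext c3]; exact h3z
      by_cases cy0 : i.val = 2*k+4
      · rw [show i = ⟨2*k+4, by omega⟩ from Fin.ext cy0]; exact hy0z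
      by_cases cy1 : i.val = 2*k+5
      · rw [show i = ⟨2*k+5, by omega⟩ from Fin.ext cy1]; exact hy1z
      rcases (show 4 ≤ i.val ∧ i.val ≤ 2*k+3 ∨ 2*k+6 ≤ i.val ∧ i.val ≤ 4*k+3 from by
          have := i.isLt; omega) with ⟨ha, hb⟩ | ⟨ha, hb⟩
      · have hc := chainx (i.val - 4) (by omega)
        rw [show (⟨4+(i.val-4), by omega⟩ : Fin (4*k+4)) = i from Fin.ext (show 4+(i.val-4) = i.val from by omega), h4z] at hc
        rcases mul_eq_zero.mp hc with h' | h'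
        · exact absurd h' (pow_ne_zero _ h0)
        · exact h'
      · have hc := chainy (i.val - (2*k+5)) (by omega)
        rw [show (⟨2*k+5+(i.val-(2*k+5)), by omega⟩ : Fin (4*k+4)) = i from
          Fin.ext (show 2*k+5+(i.val-(2*k+5)) = i.val from by omega), hy1z] at hc
        rcases mul_eq_zero.mp hc with h' | h'
        · exact absurd h' (pow_ne_zero _ h0)
        · exact h'
    · -- vX ≠ 0 : conclude
      rcases mul_eq_zero.mp hfinal with h | h
      · rcases mul_eq_zero.mp h with h' | h'
        · exact absurd h' h1
        · linear_combination h'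
      · exact absurd h hXz
  · intro hp
    refine ⟨eigvec k lam (lam+1) (lam^(2*k-2)*lam^3*(lam-1) - 2*lam), ?_, ?_⟩
    · intro hzero
      have h := congrFun hzero ⟨2*k+3, by omega⟩
      rw [eigvecX lam _ _ (⟨2*k+3, by omega⟩ : Fin (4*k+4))
            (show 4 ≤ 2*k+3 by omega) (show 2*k+3 ≤ 2*k+3 from le_rfl),
          show (2*k+3 - ((⟨2*k+3, by omega⟩ : Fin (4*k+4)) : ℕ)) = 0 from Nat.sub_self _,
          pow_zero, one_mul] at h
      simp only [Pi.zero_apply] at h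
      linarith
    · funext i
      show (Mk k *ᵥ _) i = lam * eigvec k lam _ _ i
      by_cases c0 : i.val = 0
      · rw [row0 hk _ i c0, eigvec0 lam _ _ i c0,
          eigvec0 lam _ _ (⟨0, by omega⟩ : Fin (4*k+4)) rfl,
          eigvecX lam _ _ (⟨2*k+3, by omega⟩ : Fin (4*k+4))
            (show 4 ≤ 2*k+3 by omega) (show 2*k+3 ≤ 2*k+3 from le_rfl),
          show (2*k+3 - ((⟨2*k+3, by omega⟩ : Fin (4*k+4)) : ℕ)) = 0 from Nat.sub_self _,
          pow_zero, one_mul]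
        field_simp
        ring
      by_cases c1 : i.val = 1
      · rw [row1 hk _ i c1, eigvec1 lam _ _ i c1,
          eigvec1 lam _ _ (⟨1, by omega⟩ : Fin (4*k+4)) rfl,
          eigvecX lam _ _ (⟨2*k+3, by omega⟩ : Fin (4*k+4))
            (show 4 ≤ 2*k+3 by omega) (show 2*k+3 ≤ 2*k+3 from le_rfl),
          show (2*k+3 - ((⟨2*k+3, by omega⟩ : Fin (4*k+4)) : ℕ)) = 0 from Nat.sub_self _,
          pow_zero, one_mul,
          eigvecYg lam _ _ (⟨4*k+3, by omega⟩ : Fin (4*k+4)) (show 2*k+5 ≤ 4*k+3 by omega),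
          show (4*k+3 - ((⟨4*k+3, by omega⟩ : Fin (4*k+4)) : ℕ)) = 0 from Nat.sub_self _,
          pow_zero, one_mul]
        field_simp
        ring
      by_cases c2 : i.val = 2
      · rw [row2 hk _ i c2, eigvec2 lam _ _ i c2,
          eigvecYg lam _ _ (⟨4*k+3, by omega⟩ : Fin (4*k+4)) (show 2*k+5 ≤ 4*k+3 by omega),
          show (4*k+3 - ((⟨4*k+3, by omega⟩ : Fin (4*k+4)) : ℕ)) = 0 from Nat.sub_self _,
          pow_zero, one_mul]
        field_simp
      by_cases c3 : i.val = 3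
      · rw [row3 hk _ i c3, eigvec3 lam _ _ i c3,
          eigvec2 lam _ _ (⟨2, by omega⟩ : Fin (4*k+4)) rfl,
          eigvec3 lam _ _ (⟨3, by omega⟩ : Fin (4*k+4)) rfl]
        field_simp
        ring
      by_cases c4 : i.val = 4
      · rw [row4 hk _ i c4, eigvecX lam _ _ i (by omega) (by omega),
          eigvec0 lam _ _ (⟨0, by omega⟩ : Fin (4*k+4)) rfl,
          eigvec1 lam _ _ (⟨1, by omega⟩ : Fin (4*k+4)) rfl,
          eigvec3 lam _ _ (⟨3, by omega⟩ : Fin (4*k+4)) rfl,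
          show 2*k+3 - (i:ℕ) = (2*k-2)+1 from by omega, pow_succ]
        field_simp
        ring
      by_cases cy0 : i.val = 2*k+4
      · rw [rowY0 hk _ i cy0, eigvecY0 lam _ _ i cy0,
          eigvec0 lam _ _ (⟨0, by omega⟩ : Fin (4*k+4)) rfl,
          eigvec1 lam _ _ (⟨1, by omega⟩ : Fin (4*k+4)) rfl,
          eigvecX lam _ _ (⟨2*k+3, by omega⟩ : Fin (4*k+4))
            (show 4 ≤ 2*k+3 by omega) (show 2*k+3 ≤ 2*k+3 from le_rfl),
          show (2*k+3 - ((⟨2*k+3, by omega⟩ : Fin (4*k+4)) : ℕ)) = 0 from Nat.sub_self _,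
          pow_zero, one_mul,
          show 2*k-1 = (2*k-2)+1 from by omega, pow_succ]
        field_simp
        linear_combination (1 - lam) * hp
      by_cases cy1 : i.val = 2*k+5
      · rw [rowY1 hk _ i cy1, eigvecYg lam _ _ i (by omega),
          eigvec3 lam _ _ (⟨3, by omega⟩ : Fin (4*k+4)) rfl,
          eigvecY0 lam _ _ (⟨2*k+4, by omega⟩ : Fin (4*k+4)) rfl,
          show 4*k+3 - (i:ℕ) = 2*k-2 from by omega,
          show 2*k-1 = (2*k-2)+1 from by omega, pow_succ]
        field_simp
        ring
      rcases (show 5 ≤ i.val ∧ i.val ≤ 2*k+3 ∨ 2*k+6 ≤ i.val ∧ i.val ≤ 4*k+3 from by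
          have := i.isLt; omega) with ⟨ha, hb⟩ | ⟨ha, hb⟩
      · rw [rowgen hk _ i (Or.inl ⟨ha, hb⟩),
          eigvecX lam _ _ (⟨(i:ℕ)-1, by omega⟩ : Fin (4*k+4))
            (show 4 ≤ (i:ℕ)-1 by omega) (show (i:ℕ)-1 ≤ 2*k+3 by omega),
          eigvecX lam _ _ i (by omega) (by omega),
          show (2*k+3 - ((⟨(i:ℕ)-1, by omega⟩ : Fin (4*k+4)) : ℕ)) = (2*k+3-(i:ℕ))+1 from
            (by omega : 2*k+3-((i:ℕ)-1) = (2*k+3-(i:ℕ))+1), pow_succ]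
        ring
      · rw [rowgen hk _ i (Or.inr ⟨ha, hb⟩),
          eigvecYg lam _ _ (⟨(i:ℕ)-1, by omega⟩ : Fin (4*k+4))
            (show 2*k+5 ≤ (i:ℕ)-1 by omega),
          eigvecYg lam _ _ i (by omega),
          show (4*k+3 - ((⟨(i:ℕ)-1, by omega⟩ : Fin (4*k+4)) : ℕ)) = (4*k+3-(i:ℕ))+1 from
            (by omega : 4*k+3-((i:ℕ)-1) = (4*k+3-(i:ℕ))+1), pow_succ]
        ring
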